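/- (Proposition 1: RLOO update with rejection sampling.) Let Z be a finite type, Θ = ℝ^d a parameter space, and π₀ : Θ → Z → ℝ a parameterized family of probability mass functions. Fix θ₀ ∈ Θ and a subset S ⊆ Z such that π₀(θ₀, S) := Σ_{z ∈ S} π₀(θ₀, z) > 0, and such that for each z ∈ S the map θ ↦ π₀(θ, z) is differentiable at θ₀ with π₀(θ₀, z) > 0. Define the rejection-sampled family π(θ, z) = π₀(θ, z) · 1_{z ∈ S} / π₀(θ, S). Let R : Z → ℝ be a reward function, let g ≥ 2, and let z₁, …, z_g ∈ S. Define the RLOO advantages A(zᵢ) = R(zᵢ) − (1/(g−1)) Σ_{j ≠ i} R(z_j). Then Σ_{i=1}^{g} A(zᵢ) • ∇_θ ln π(θ₀, zᵢ) = Σ_{i=1}^{g} A(zᵢ) • ∇_θ ln π₀(θ₀, zᵢ), where ∇_θ denotes the gradient with respect to θ ∈ ℝ^d. In other words, the RLOO policy-gradient update for the rejection-sampled distribution π can be computed using gradients of the proposal distribution π₀ only. -/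

import Mathlib

/-- Proposition 1 (RLOO update with rejection sampling): the advantage-weighted
sum of log-density gradients of the rejection-sampled distribution `π` equals
the corresponding sum for the proposal distribution `π₀`. -/
theorem rloo_update_rejection_sampling {Z : Type*} [Fintype Z] [DecidableEq Z] {d : ℕ}
    (π₀ : (Fin d → ℝ) → Z → ℝ)
    (hpmf : ∀ θ, (∀ z, 0 ≤ π₀ θ z) ∧ ∑ z, π₀ θ z = 1)
    (θ₀ : Fin d → ℝ) (S : Finset Z)
    (hSpos : 0 < ∑ z ∈ S, π₀ θ₀ z)
    (hdiff : ∀ z ∈ S, DifferentiableAt ℝ (fun θ => π₀ θ z) θ₀)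
    (hpos : ∀ z ∈ S, 0 < π₀ θ₀ z)
    (π : (Fin d → ℝ) → Z → ℝ)
    (hπ : ∀ θ w, π θ w = π₀ θ w * (if w ∈ S then (1 : ℝ) else 0) / ∑ u ∈ S, π₀ θ u)
    (R : Z → ℝ) (g : ℕ) (hg : 2 ≤ g)
    (z : Fin g → Z) (hzS : ∀ i, z i ∈ S)
    (A : Fin g → ℝ)
    (hA : ∀ i, A i = R (z i) -
      (1 / ((g : ℝ) - 1)) * ∑ j ∈ Finset.univ.filter (fun j => j ≠ i), R (z j)) :
    ∑ i, A i • fderiv ℝ (fun θ => Real.log (π θ (z i))) θ₀ =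
      ∑ i, A i • fderiv ℝ (fun θ => Real.log (π₀ θ (z i))) θ₀ := by
  -- the normalizing constant
  set f : (Fin d → ℝ) → ℝ := fun θ => ∑ u ∈ S, π₀ θ u with hf
  have hfdiff : DifferentiableAt ℝ f θ₀ :=
    DifferentiableAt.fun_sum (fun u hu => hdiff u hu)
  have hfcont : ContinuousAt f θ₀ := hfdiff.continuousAt
  have hfev : ∀ᶠ θ in nhds θ₀, 0 < f θ :=
    hfcont.eventually (eventually_gt_nhds hSpos)
  -- sum of advantages is zero
  have hAsum : ∑ i, A i = 0 := by
    have hg1 : ((g : ℝ) - 1) ≠ 0 := by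
      have : (2 : ℝ) ≤ (g : ℝ) := by exact_mod_cast hg
      linarith
    have hsum : ∀ i : Fin g,
        ∑ j ∈ Finset.univ.filter (fun j => j ≠ i), R (z j)
          = (∑ j, R (z j)) - R (z i) := by
      intro i
      rw [Finset.filter_ne', Finset.sum_erase_eq_sub (Finset.mem_univ i)]
    have : ∑ i, A i = ∑ i, (R (z i) - (1 / ((g : ℝ) - 1)) * ((∑ j, R (z j)) - R (z i))) := by
      refine Finset.sum_congr rfl fun i _ => ?_
      rw [hA i, hsum i]
    rw [this, Finset.sum_sub_distrib]
    rw [← Finset.mul_sum, Finset.sum_sub_distrib, Finset.sum_const, Finset.card_univ,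
      Fintype.card_fin]
    field_simp
    ring
  -- gradient decomposition
  have key : ∀ i : Fin g,
      fderiv ℝ (fun θ => Real.log (π θ (z i))) θ₀ =
        fderiv ℝ (fun θ => Real.log (π₀ θ (z i))) θ₀ - fderiv ℝ (fun θ => Real.log (f θ)) θ₀ := by
    intro i
    have hdi := hdiff (z i) (hzS i)
    have hpi := hpos (z i) (hzS i)
    have hpev : ∀ᶠ θ in nhds θ₀, 0 < π₀ θ (z i) :=
      hdi.continuousAt.eventually (eventually_gt_nhds hpi)
    have heq : (fun θ => Real.log (π θ (z i))) =ᶠ[nhds θ₀]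
        (fun θ => Real.log (π₀ θ (z i)) - Real.log (f θ)) := by
      filter_upwards [hpev, hfev] with θ h1 h2
      rw [hπ θ (z i), if_pos (hzS i), mul_one, Real.log_div h1.ne' h2.ne']
    rw [heq.fderiv_eq]
    have hd1 : DifferentiableAt ℝ (fun θ => Real.log (π₀ θ (z i))) θ₀ :=
      (Real.differentiableAt_log hpi.ne').comp (g := Real.log) θ₀ hdi
    have hd2 : DifferentiableAt ℝ (fun θ => Real.log (f θ)) θ₀ :=
      (Real.differentiableAt_log hSpos.ne').comp (g := Real.log) θ₀ hfdiff
    exact fderiv_fun_sub hd1 hd2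
  calc ∑ i, A i • fderiv ℝ (fun θ => Real.log (π θ (z i))) θ₀
      = ∑ i, (A i • fderiv ℝ (fun θ => Real.log (π₀ θ (z i))) θ₀
          - A i • fderiv ℝ (fun θ => Real.log (f θ)) θ₀) := by
        refine Finset.sum_congr rfl fun i _ => ?_
        rw [key i, smul_sub]
    _ = ∑ i, A i • fderiv ℝ (fun θ => Real.log (π₀ θ (z i))) θ₀ := by
        rw [Finset.sum_sub_distrib, ← Finset.sum_smul, hAsum, zero_smul, sub_zero]
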